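/- In the two-grid algorithm, the coarse-grid correction e_H^k satisfies, for all v_H ∈ V_H, B(u_h^{k,1}; e_H^k, v_H) ≤ C (‖E_k‖₁ + ‖E_{k+1}‖₁) ‖v_H‖₁, with C independent of h, H and k. -/

import Mathlib

open MeasureTheory
open scoped RealInnerProductSpace ENNReal NNReal

noncomputable section

/-- The plane `ℝ²`. -/
abbrev E2 : Type := EuclideanSpace ℝ (Fin 2)

/-- Sobolev norm `‖v‖_{m,p,Ω}`: the sum of the `L^p(Ω)` norms of the iterated
derivatives of `v` of order `≤ m` (`p = ∞` allowed). -/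
def wNorm (Ω : Set E2) (m : ℕ) (p : ℝ≥0∞) (v : E2 → ℝ) : ℝ :=
  ∑ i ∈ Finset.range (m + 1),
    (eLpNorm (fun x => ‖iteratedFDeriv ℝ i v x‖) p (volume.restrict Ω)).toReal

/-- Membership in `W^{m,p}(Ω)`. -/
def MemW (Ω : Set E2) (m : ℕ) (p : ℝ≥0∞) (v : E2 → ℝ) : Prop :=
  ContDiffOn ℝ m v Ω ∧
  ∀ i ≤ m, eLpNorm (fun x => ‖iteratedFDeriv ℝ i v x‖) p (volume.restrict Ω) < ⊤

/-- Membership in `H¹₀(Ω)`. -/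
def MemH10 (Ω : Set E2) (v : E2 → ℝ) : Prop :=
  DifferentiableOn ℝ v Ω ∧
  (∀ i ≤ 1, eLpNorm (fun x => ‖iteratedFDeriv ℝ i v x‖) 2 (volume.restrict Ω) < ⊤) ∧
  ∀ x ∉ Ω, v x = 0

/-- `a_y(w)(x) = D_y a(x, w(x), ∇w(x))`. -/
def aY (a : E2 → ℝ → E2 → E2) (w : E2 → ℝ) (x : E2) : E2 :=
  deriv (fun y => a x y (gradient w x)) (w x)

/-- `a_z(w)(x) = D_z a(x, w(x), ∇w(x))`. -/
def aZ (a : E2 → ℝ → E2 → E2) (w : E2 → ℝ) (x : E2) : E2 →L[ℝ] E2 :=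
  fderiv ℝ (a x (w x)) (gradient w x)

/-- `f_y(w)(x) = D_y f(x, w(x), ∇w(x))`. -/
def fY (f : E2 → ℝ → E2 → ℝ) (w : E2 → ℝ) (x : E2) : ℝ :=
  deriv (fun y => f x y (gradient w x)) (w x)

/-- `f_z(w)(x) = D_z f(x, w(x), ∇w(x))`. -/
def fZ (f : E2 → ℝ → E2 → ℝ) (w : E2 → ℝ) (x : E2) : E2 →L[ℝ] ℝ :=
  fderiv ℝ (f x (w x)) (gradient w x)

/-- The nonlinear form `A(v, φ) = (a(x,v,∇v), ∇φ) + (f(x,v,∇v), φ)`. -/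
def Aform (Ω : Set E2) (a : E2 → ℝ → E2 → E2) (f : E2 → ℝ → E2 → ℝ)
    (v φ : E2 → ℝ) : ℝ :=
  (∫ x in Ω, ⟪a x (v x) (gradient v x), gradient φ x⟫) +
  ∫ x in Ω, f x (v x) (gradient v x) * φ x

/-- The linearized form
`B(w; v, χ) = (a_y(w)v, ∇χ) + (a_z(w)∇v, ∇χ) + (f_y(w)v, χ) + (f_z(w)∇v, χ)`. -/
def Bform (Ω : Set E2) (a : E2 → ℝ → E2 → E2) (f : E2 → ℝ → E2 → ℝ)
    (w v χ : E2 → ℝ) : ℝ :=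
  (∫ x in Ω, ⟪v x • aY a w x, gradient χ x⟫) +
  (∫ x in Ω, ⟪aZ a w x (gradient v x), gradient χ x⟫) +
  (∫ x in Ω, fY f w x * v x * χ x) +
  ∫ x in Ω, fZ f w x (gradient v x) * χ x

/-- `a` is twice continuously differentiable with bounded first and second
order derivatives. -/
def SmoothBoundedA (a : E2 → ℝ → E2 → E2) : Prop :=
  ContDiff ℝ 2 (fun q : E2 × ℝ × E2 => a q.1 q.2.1 q.2.2) ∧
  ∃ Ct > (0:ℝ), ∀ q : E2 × ℝ × E2, ∀ i : ℕ, 1 ≤ i → i ≤ 2 →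
    ‖iteratedFDeriv ℝ i (fun q : E2 × ℝ × E2 => a q.1 q.2.1 q.2.2) q‖ ≤ Ct

/-- `f` is twice continuously differentiable with bounded first and second
order derivatives. -/
def SmoothBoundedF (f : E2 → ℝ → E2 → ℝ) : Prop :=
  ContDiff ℝ 2 (fun q : E2 × ℝ × E2 => f q.1 q.2.1 q.2.2) ∧
  ∃ Ct > (0:ℝ), ∀ q : E2 × ℝ × E2, ∀ i : ℕ, 1 ≤ i → i ≤ 2 →
    ‖iteratedFDeriv ℝ i (fun q : E2 × ℝ × E2 => f q.1 q.2.1 q.2.2) q‖ ≤ Ct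

/-- A bounded convex (polygonal) domain in the plane. -/
def NiceDomain (Ω : Set E2) : Prop :=
  IsOpen Ω ∧ Convex ℝ Ω ∧ Bornology.IsBounded Ω ∧ Ω.Nonempty

/-- Uniform ellipticity of `a_z(u)`: `ξᵀ a_z(u) ξ ≥ α₀ |ξ|²` on `Ω̄`. -/
def Elliptic (Ω : Set E2) (a : E2 → ℝ → E2 → E2) (u : E2 → ℝ) (α₀ : ℝ) : Prop :=
  ∀ x ∈ closure Ω, ∀ ξ : E2, α₀ * ‖ξ‖ ^ 2 ≤ ⟪ξ, aZ a u x ξ⟫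

/-- The Fréchet derivative `L'(u) : H¹₀ → H⁻¹` is an isomorphism, expressed by
inf-sup conditions for the linearized form `B(u; ·, ·)` on `H¹₀(Ω)`. -/
def FrechetIso (Ω : Set E2) (a : E2 → ℝ → E2 → E2) (f : E2 → ℝ → E2 → ℝ)
    (u : E2 → ℝ) : Prop :=
  ∃ c > (0:ℝ),
    (∀ w, MemH10 Ω w → ∃ v, MemH10 Ω v ∧
      wNorm Ω 1 2 w * wNorm Ω 1 2 v ≤ c * Bform Ω a f u w v) ∧
    (∀ w, MemH10 Ω w → ∃ v, MemH10 Ω v ∧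
      wNorm Ω 1 2 w * wNorm Ω 1 2 v ≤ c * Bform Ω a f u v w)

/-- The assumptions on the isolated exact solution `u` of `A(u, v) = 0`. -/
def ExactSolution (Ω : Set E2) (a : E2 → ℝ → E2 → E2) (f : E2 → ℝ → E2 → ℝ)
    (u : E2 → ℝ) (r : ℕ) (ε α₀ : ℝ) : Prop :=
  MemH10 Ω u ∧ MemW Ω (r + 1) 2 u ∧ MemW Ω 2 (ENNReal.ofReal (2 + ε)) u ∧
  (∀ v, MemH10 Ω v → Aform Ω a f u v = 0) ∧
  Elliptic Ω a u α₀ ∧ FrechetIso Ω a f u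

/-- An abstract conforming finite element subspace of `H¹₀(Ω)`. -/
def FESpace (Ω : Set E2) (V : Submodule ℝ (E2 → ℝ)) : Prop :=
  (∀ v ∈ V, MemH10 Ω v) ∧ FiniteDimensional ℝ V

/-- `uh` is the finite element solution in `V`. -/
def FESolution (Ω : Set E2) (a : E2 → ℝ → E2 → E2) (f : E2 → ℝ → E2 → ℝ)
    (V : Submodule ℝ (E2 → ℝ)) (uh : E2 → ℝ) : Prop :=
  uh ∈ V ∧ ∀ vh ∈ V, Aform Ω a f uh vh = 0

/-- The iterative two-grid algorithm: `uhk 0 = u_H`, and at each step `eHk k ∈ V_H`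
solves the coarse nonlinear problem while `uhk (k+1) ∈ V_h` solves the fine linearized
problem. -/
def TwoGrid (Ω : Set E2) (a : E2 → ℝ → E2 → E2) (f : E2 → ℝ → E2 → ℝ)
    (VH Vh : Submodule ℝ (E2 → ℝ)) (uhk eHk : ℕ → E2 → ℝ) : Prop :=
  FESolution Ω a f VH (uhk 0) ∧
  ∀ k : ℕ,
    (eHk k ∈ VH ∧ ∀ vH ∈ VH, Aform Ω a f (uhk k + eHk k) vH = 0) ∧
    (uhk (k + 1) ∈ Vh ∧ ∀ vh ∈ Vh,
      Bform Ω a f (uhk k + eHk k) (uhk (k + 1)) vh =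
        Bform Ω a f (uhk k + eHk k) (uhk k + eHk k) vh -
          Aform Ω a f (uhk k + eHk k) vh)

/-- The Babuška–Brezzi (inf-sup) conditions for `B(w; ·, ·)` on `V` with constant `C`. -/
def BBcond (Ω : Set E2) (a : E2 → ℝ → E2 → E2) (f : E2 → ℝ → E2 → ℝ)
    (w : E2 → ℝ) (V : Submodule ℝ (E2 → ℝ)) (C : ℝ) : Prop :=
  (∀ wh ∈ V, ∃ vh ∈ V, wNorm Ω 1 2 wh * wNorm Ω 1 2 vh ≤ C * Bform Ω a f w wh vh) ∧
  (∀ wh ∈ V, ∃ vh ∈ V, wNorm Ω 1 2 wh * wNorm Ω 1 2 vh ≤ C * Bform Ω a f w vh wh)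

/-- `∂²a/∂y²` at the point `(x, y, z)`. -/
def aYY (a : E2 → ℝ → E2 → E2) (x : E2) (y : ℝ) (z : E2) : E2 :=
  deriv (fun s => deriv (fun t => a x t z) s) y

/-- `∂²a/∂y∂z` at the point `(x, y, z)`. -/
def aYZ (a : E2 → ℝ → E2 → E2) (x : E2) (y : ℝ) (z : E2) : E2 →L[ℝ] E2 :=
  fderiv ℝ (fun w => deriv (fun t => a x t w) y) z

/-- `∂²a/∂z²` at the point `(x, y, z)`. -/
def aZZ (a : E2 → ℝ → E2 → E2) (x : E2) (y : ℝ) (z : E2) : E2 →L[ℝ] E2 →L[ℝ] E2 :=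
  fderiv ℝ (fun w => fderiv ℝ (a x y) w) z

/-- `∂²f/∂y²` at the point `(x, y, z)`. -/
def fYY (f : E2 → ℝ → E2 → ℝ) (x : E2) (y : ℝ) (z : E2) : ℝ :=
  deriv (fun s => deriv (fun t => f x t z) s) y

/-- `∂²f/∂y∂z` at the point `(x, y, z)`. -/
def fYZ (f : E2 → ℝ → E2 → ℝ) (x : E2) (y : ℝ) (z : E2) : E2 →L[ℝ] ℝ :=
  fderiv ℝ (fun w => deriv (fun t => f x t w) y) z

/-- `∂²f/∂z²` at the point `(x, y, z)`. -/
def fZZ (f : E2 → ℝ → E2 → ℝ) (x : E2) (y : ℝ) (z : E2) : E2 →L[ℝ] E2 →L[ℝ] ℝ :=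
  fderiv ℝ (fun w => fderiv ℝ (f x y) w) z

/-- The second order Taylor remainder
`R(η; v, w, χ)` with `η = v + t (w - v)` inside the integral. -/
def Rform (Ω : Set E2) (a : E2 → ℝ → E2 → E2) (f : E2 → ℝ → E2 → ℝ)
    (v w χ : E2 → ℝ) : ℝ :=
  ∫ t in (0:ℝ)..1, (1 - t) *
    ((∫ x in Ω, ⟪(v x - w x) ^ 2 •
        aYY a x (v x + t * (w x - v x)) (gradient v x + t • (gradient w x - gradient v x)),
        gradient χ x⟫) +
     2 * (∫ x in Ω, ⟪(v x - w x) •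
        aYZ a x (v x + t * (w x - v x)) (gradient v x + t • (gradient w x - gradient v x))
          (gradient v x - gradient w x), gradient χ x⟫) +
     (∫ x in Ω, ⟪aZZ a x (v x + t * (w x - v x))
          (gradient v x + t • (gradient w x - gradient v x))
          (gradient v x - gradient w x) (gradient v x - gradient w x), gradient χ x⟫) +
     (∫ x in Ω, fYY f x (v x + t * (w x - v x))
          (gradient v x + t • (gradient w x - gradient v x)) * (v x - w x) ^ 2 * χ x) +
     2 * (∫ x in Ω, fYZ f x (v x + t * (w x - v x))
          (gradient v x + t • (gradient w x - gradient v x))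
          (gradient v x - gradient w x) * (v x - w x) * χ x) +
     ∫ x in Ω, fZZ f x (v x + t * (w x - v x))
          (gradient v x + t • (gradient w x - gradient v x))
          (gradient v x - gradient w x) (gradient v x - gradient w x) * χ x)

/-- `Pv` is the elliptic projection `P_h v` of `v` into `V`, defined by
`(a_z(u) ∇ P_h v, ∇χ) = (a_z(u) ∇ v, ∇χ)` for all `χ ∈ V`. -/
def IsPh (Ω : Set E2) (a : E2 → ℝ → E2 → E2) (u : E2 → ℝ)
    (V : Submodule ℝ (E2 → ℝ)) (v Pv : E2 → ℝ) : Prop :=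
  Pv ∈ V ∧ ∀ χ ∈ V,
    (∫ x in Ω, ⟪aZ a u x (gradient Pv x), gradient χ x⟫) =
    ∫ x in Ω, ⟪aZ a u x (gradient v x), gradient χ x⟫

/-- `Pw` is the projection `P̂_H w` of `w` into `V`, defined by
`B(u_h; P̂_H w, v_H) = B(u_h; w, v_H)` for all `v_H ∈ V`. -/
def IsPHat (Ω : Set E2) (a : E2 → ℝ → E2 → E2) (f : E2 → ℝ → E2 → ℝ)
    (uh : E2 → ℝ) (V : Submodule ℝ (E2 → ℝ)) (w Pw : E2 → ℝ) : Prop :=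
  Pw ∈ V ∧ ∀ vH ∈ V, Bform Ω a f uh Pw vH = Bform Ω a f uh w vH

/-! ### Auxiliary machinery for the proof -/

section TGAux

lemma norm_gradient' (g : E2 → ℝ) (x : E2) : ‖gradient g x‖ = ‖fderiv ℝ g x‖ :=
  LinearIsometryEquiv.norm_map _ _

lemma measurable_gradient' (g : E2 → ℝ) : Measurable (fun x => gradient g x) :=
  ((InnerProductSpace.toDual ℝ E2).symm.continuous.measurable).comp (measurable_fderiv ℝ g)

lemma gradient_neg'' (g : E2 → ℝ) (x : E2) : gradient (-g) x = - gradient g x := by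
  unfold gradient
  rw [fderiv_neg, map_neg]

lemma gradient_add' {g h : E2 → ℝ} {x : E2} (hg : DifferentiableAt ℝ g x)
    (hh : DifferentiableAt ℝ h x) :
    gradient (g + h) x = gradient g x + gradient h x := by
  unfold gradient
  rw [fderiv_add hg hh, map_add]

section Generic
variable {G : Type*} [NormedAddCommGroup G] [NormedSpace ℝ G]

def J1 : ℝ →L[ℝ] E2 × ℝ × E2 :=
  (0 : ℝ →L[ℝ] E2).prod ((ContinuousLinearMap.id ℝ ℝ).prod (0 : ℝ →L[ℝ] E2))

def J2 : E2 →L[ℝ] E2 × ℝ × E2 :=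
  (0 : E2 →L[ℝ] E2).prod ((0 : E2 →L[ℝ] ℝ).prod (ContinuousLinearMap.id ℝ E2))

variable {φ : E2 → ℝ → E2 → G}

lemma hasFDerivAt_partialY
    (hφ : Differentiable ℝ (fun q : E2 × ℝ × E2 => φ q.1 q.2.1 q.2.2)) (x : E2) (z : E2) (y : ℝ) :
    HasFDerivAt (fun t : ℝ => φ x t z)
      ((fderiv ℝ (fun q : E2 × ℝ × E2 => φ q.1 q.2.1 q.2.2) (x, y, z)).comp J1) y :=
  (hφ (x, y, z)).hasFDerivAt.comp y (f := fun t : ℝ => (x, t, z))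
    ((hasFDerivAt_const x y).prodMk ((hasFDerivAt_id y).prodMk (hasFDerivAt_const z y)))

lemma derivY_eq
    (hφ : Differentiable ℝ (fun q : E2 × ℝ × E2 => φ q.1 q.2.1 q.2.2)) (x : E2) (z : E2) (y : ℝ) :
    deriv (fun t : ℝ => φ x t z) y =
      fderiv ℝ (fun q : E2 × ℝ × E2 => φ q.1 q.2.1 q.2.2) (x, y, z) (0, 1, 0) := by
  have h := (hasFDerivAt_partialY hφ x z y).hasDerivAt.deriv
  simpa [J1] using h

lemma hasFDerivAt_partialZ
    (hφ : Differentiable ℝ (fun q : E2 × ℝ × E2 => φ q.1 q.2.1 q.2.2)) (x : E2) (y : ℝ) (z : E2) :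
    HasFDerivAt (φ x y)
      ((fderiv ℝ (fun q : E2 × ℝ × E2 => φ q.1 q.2.1 q.2.2) (x, y, z)).comp J2) z :=
  (hφ (x, y, z)).hasFDerivAt.comp z (f := fun w : E2 => (x, y, w))
    ((hasFDerivAt_const x z).prodMk ((hasFDerivAt_const y z).prodMk (hasFDerivAt_id z)))

lemma fderivZ_eq
    (hφ : Differentiable ℝ (fun q : E2 × ℝ × E2 => φ q.1 q.2.1 q.2.2)) (x : E2) (y : ℝ) (z : E2) :
    fderiv ℝ (φ x y) z =
      (fderiv ℝ (fun q : E2 × ℝ × E2 => φ q.1 q.2.1 q.2.2) (x, y, z)).comp J2 :=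
  (hasFDerivAt_partialZ hφ x y z).fderiv

lemma norm_fderiv_uncurry_le {Ct : ℝ}
    (hb : ∀ q : E2 × ℝ × E2, ∀ i : ℕ, 1 ≤ i → i ≤ 2 →
      ‖iteratedFDeriv ℝ i (fun q : E2 × ℝ × E2 => φ q.1 q.2.1 q.2.2) q‖ ≤ Ct)
    (q : E2 × ℝ × E2) :
    ‖fderiv ℝ (fun q : E2 × ℝ × E2 => φ q.1 q.2.1 q.2.2) q‖ ≤ Ct := by
  have h0 : ‖iteratedFDeriv ℝ 0 (fderiv ℝ (fun q : E2 × ℝ × E2 => φ q.1 q.2.1 q.2.2)) q‖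
      = ‖fderiv ℝ (fun q : E2 × ℝ × E2 => φ q.1 q.2.1 q.2.2) q‖ := norm_iteratedFDeriv_zero
  rw [← h0, norm_iteratedFDeriv_fderiv]
  exact hb q 1 le_rfl one_le_two

end Generic

section IntegralTools
variable {α : Type*} [MeasurableSpace α] {μ : Measure α}
variable {F G : Type*} [NormedAddCommGroup F] [NormedAddCommGroup G]

lemma two_conj : Real.HolderConjugate 2 2 := Real.holderConjugate_iff.mpr ⟨one_lt_two, by norm_num⟩

lemma toReal_eLpNorm_two {f : α → F} (hf : MemLp f 2 μ) :
    (eLpNorm f 2 μ).toReal = (∫ x, ‖f x‖ ^ (2:ℝ) ∂μ) ^ (2:ℝ)⁻¹ := by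
  rw [hf.eLpNorm_eq_integral_rpow_norm two_ne_zero ENNReal.ofNat_ne_top]
  rw [ENNReal.toReal_ofReal]
  · norm_num
  · positivity

lemma cs_integral {f : α → F} {g : α → G} (hf : MemLp f 2 μ) (hg : MemLp g 2 μ) :
    ∫ x, ‖f x‖ * ‖g x‖ ∂μ ≤ (eLpNorm f 2 μ).toReal * (eLpNorm g 2 μ).toReal := by
  have h2 : (ENNReal.ofReal (2:ℝ)) = 2 := by norm_num
  have hf2 : MemLp (fun x => ‖f x‖) (ENNReal.ofReal (2:ℝ)) μ := by rw [h2]; exact hf.norm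
  have hg2 : MemLp (fun x => ‖g x‖) (ENNReal.ofReal (2:ℝ)) μ := by rw [h2]; exact hg.norm
  have key := integral_mul_norm_le_Lp_mul_Lq (μ := μ) two_conj hf2 hg2
  simp only [norm_norm] at key
  rw [toReal_eLpNorm_two hf, toReal_eLpNorm_two hg]
  calc ∫ x, ‖f x‖ * ‖g x‖ ∂μ
      ≤ (∫ x, ‖f x‖ ^ (2:ℝ) ∂μ) ^ (1/(2:ℝ)) * (∫ x, ‖g x‖ ^ (2:ℝ) ∂μ) ^ (1/(2:ℝ)) := key
    _ = (∫ x, ‖f x‖ ^ (2:ℝ) ∂μ) ^ (2:ℝ)⁻¹ * (∫ x, ‖g x‖ ^ (2:ℝ) ∂μ) ^ (2:ℝ)⁻¹ := by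
        rw [one_div]

lemma integrable_norm_mul {f : α → F} {g : α → G} (hf : MemLp f 2 μ) (hg : MemLp g 2 μ) :
    Integrable (fun x => ‖f x‖ * ‖g x‖) μ := by
  have hf' : MemLp (fun x => ‖f x‖) 2 μ := hf.norm
  have hg' : MemLp (fun x => ‖g x‖) 2 μ := hg.norm
  have h := L2.integrable_inner (𝕜 := ℝ) (hf'.toLp _) (hg'.toLp _)
  refine h.congr ?_
  filter_upwards [hf'.coeFn_toLp, hg'.coeFn_toLp] with x h1 h2
  rw [h1, h2]
  simp [RCLike.inner_apply, mul_comm]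

lemma integrable_and_integral_le {φ : α → ℝ} {f : α → F} {g : α → G} {C : ℝ} (hC : 0 ≤ C)
    (hφm : AEStronglyMeasurable φ μ) (hf : MemLp f 2 μ) (hg : MemLp g 2 μ)
    (hbound : ∀ x, ‖φ x‖ ≤ C * (‖f x‖ * ‖g x‖)) :
    Integrable φ μ ∧
      ∫ x, φ x ∂μ ≤ C * ((eLpNorm f 2 μ).toReal * (eLpNorm g 2 μ).toReal) := by
  have hint : Integrable (fun x => C * (‖f x‖ * ‖g x‖)) μ :=
    (integrable_norm_mul hf hg).const_mul C
  have hφ : Integrable φ μ := hint.mono' hφm (Filter.Eventually.of_forall hbound)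
  refine ⟨hφ, ?_⟩
  calc ∫ x, φ x ∂μ ≤ ∫ x, C * (‖f x‖ * ‖g x‖) ∂μ := by
        refine integral_mono_ae hφ hint (Filter.Eventually.of_forall fun x => ?_)
        exact (le_abs_self _).trans (hbound x)
    _ = C * ∫ x, ‖f x‖ * ‖g x‖ ∂μ := integral_const_mul _ _
    _ ≤ C * ((eLpNorm f 2 μ).toReal * (eLpNorm g 2 μ).toReal) :=
        mul_le_mul_of_nonneg_left (cs_integral hf hg) hC

end IntegralTools

end TGAux
section TGAux2

/-- The regularity data we actually use. -/
def NiceFn (Ω : Set E2) (v : E2 → ℝ) : Prop :=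
  DifferentiableOn ℝ v Ω ∧ MemLp v 2 (volume.restrict Ω) ∧
    MemLp (fun x => gradient v x) 2 (volume.restrict Ω)

lemma eLpNorm_itFD0 (μ : Measure E2) (v : E2 → ℝ) :
    eLpNorm (fun x => ‖iteratedFDeriv ℝ 0 v x‖) 2 μ = eLpNorm v 2 μ := by
  have : (fun x => ‖iteratedFDeriv ℝ 0 v x‖) = fun x => ‖v x‖ :=
    funext fun x => norm_iteratedFDeriv_zero
  rw [this, eLpNorm_norm]

lemma eLpNorm_itFD1 (μ : Measure E2) (v : E2 → ℝ) :
    eLpNorm (fun x => ‖iteratedFDeriv ℝ 1 v x‖) 2 μ =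
      eLpNorm (fun x => gradient v x) 2 μ := by
  have : (fun x => ‖iteratedFDeriv ℝ 1 v x‖) = fun x => ‖gradient v x‖ := by
    funext x
    rw [← norm_iteratedFDeriv_fderiv (n := 0), norm_iteratedFDeriv_zero, norm_gradient']
  rw [this, eLpNorm_norm]

lemma wNorm_eq (Ω : Set E2) (v : E2 → ℝ) :
    wNorm Ω 1 2 v = (eLpNorm v 2 (volume.restrict Ω)).toReal +
      (eLpNorm (fun x => gradient v x) 2 (volume.restrict Ω)).toReal := by
  unfold wNorm
  rw [Finset.sum_range_succ, Finset.sum_range_succ, Finset.sum_range_zero, zero_add,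
    eLpNorm_itFD0, eLpNorm_itFD1]

lemma wNorm_nonneg' (Ω : Set E2) (v : E2 → ℝ) : 0 ≤ wNorm Ω 1 2 v := by
  rw [wNorm_eq]; positivity

lemma memH10_nice {Ω : Set E2} {v : E2 → ℝ} (hΩm : MeasurableSet Ω) (hv : MemH10 Ω v) :
    NiceFn Ω v := by
  obtain ⟨hd, hl, -⟩ := hv
  refine ⟨hd, ⟨(hd.continuousOn).aestronglyMeasurable hΩm, ?_⟩,
    ⟨(measurable_gradient' v).aestronglyMeasurable, ?_⟩⟩
  · rw [← eLpNorm_itFD0 (volume.restrict Ω) v]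
    exact hl 0 (by norm_num)
  · rw [← eLpNorm_itFD1 (volume.restrict Ω) v]
    exact hl 1 le_rfl

lemma NiceFn.neg' {Ω : Set E2} {v : E2 → ℝ} (hv : NiceFn Ω v) : NiceFn Ω (-v) := by
  obtain ⟨hd, h0, h1⟩ := hv
  refine ⟨hd.neg, h0.neg, ?_⟩
  have : (fun x => gradient (-v) x) = -(fun x => gradient v x) :=
    funext fun x => gradient_neg'' v x
  rw [this]
  exact h1.neg

lemma NiceFn.sub' {Ω : Set E2} {v₁ v₂ : E2 → ℝ} (hΩo : IsOpen Ω)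
    (h₁ : NiceFn Ω v₁) (h₂ : NiceFn Ω v₂) : NiceFn Ω (v₁ - v₂) := by
  refine ⟨h₁.1.sub h₂.1, ?_, ?_⟩
  · have := h₁.2.1.sub h₂.2.1
    simpa [sub_eq_add_neg] using this
  · refine MemLp.ae_eq ?_ (h₁.2.2.sub h₂.2.2)
    filter_upwards [ae_restrict_mem hΩo.measurableSet] with x hx
    have d₁ := h₁.1.differentiableAt (hΩo.mem_nhds hx)
    have d₂ := h₂.1.differentiableAt (hΩo.mem_nhds hx)
    show gradient v₁ x - gradient v₂ x = gradient (v₁ - v₂) x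
    have : v₁ - v₂ = v₁ + -v₂ := sub_eq_add_neg v₁ v₂
    have d₂' : DifferentiableAt ℝ (-v₂) x := d₂.neg
    rw [this, gradient_add' d₁ d₂', gradient_neg'', sub_eq_add_neg]

lemma wNorm_neg' (Ω : Set E2) (v : E2 → ℝ) : wNorm Ω 1 2 (-v) = wNorm Ω 1 2 v := by
  rw [wNorm_eq, wNorm_eq, eLpNorm_neg]
  congr 2
  have : (fun x => gradient (-v) x) = -(fun x => gradient v x) :=
    funext fun x => gradient_neg'' v x
  rw [this, eLpNorm_neg]

end TGAux2
section TGAux3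

lemma norm_triple_y (y : ℝ) : ‖((0 : E2), y, (0 : E2))‖ = ‖y‖ := by
  simp [Prod.norm_def]

lemma norm_triple_z (z : E2) : ‖((0 : E2), (0 : ℝ), z)‖ = ‖z‖ := by
  simp [Prod.norm_def]

variable {G : Type*} [NormedAddCommGroup G] [NormedSpace ℝ G]
variable {Ω : Set E2} {w v χ : E2 → ℝ} {Ca : ℝ}

section PhiGeneric
variable {φ : E2 → ℝ → E2 → G}

lemma phiY_rep (hAd : Differentiable ℝ (fun q : E2 × ℝ × E2 => φ q.1 q.2.1 q.2.2))
    (w : E2 → ℝ) (x : E2) :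
    deriv (fun y => φ x y (gradient w x)) (w x) =
      fderiv ℝ (fun q : E2 × ℝ × E2 => φ q.1 q.2.1 q.2.2) (x, w x, gradient w x) (0, 1, 0) :=
  derivY_eq hAd x (gradient w x) (w x)

lemma phiZ_rep (hAd : Differentiable ℝ (fun q : E2 × ℝ × E2 => φ q.1 q.2.1 q.2.2))
    (w : E2 → ℝ) (x : E2) (u : E2) :
    fderiv ℝ (φ x (w x)) (gradient w x) u =
      fderiv ℝ (fun q : E2 × ℝ × E2 => φ q.1 q.2.1 q.2.2) (x, w x, gradient w x) (0, 0, u) := by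
  rw [fderivZ_eq hAd]
  simp [J2]

lemma phiY_le (hAd : Differentiable ℝ (fun q : E2 × ℝ × E2 => φ q.1 q.2.1 q.2.2))
    (hCa : ∀ q, ‖fderiv ℝ (fun q : E2 × ℝ × E2 => φ q.1 q.2.1 q.2.2) q‖ ≤ Ca)
    (w : E2 → ℝ) (x : E2) :
    ‖deriv (fun y => φ x y (gradient w x)) (w x)‖ ≤ Ca := by
  rw [phiY_rep hAd]
  calc ‖fderiv ℝ (fun q : E2 × ℝ × E2 => φ q.1 q.2.1 q.2.2) (x, w x, gradient w x) (0, 1, 0)‖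
      ≤ ‖fderiv ℝ (fun q : E2 × ℝ × E2 => φ q.1 q.2.1 q.2.2) (x, w x, gradient w x)‖ *
        ‖((0 : E2), (1 : ℝ), (0 : E2))‖ := ContinuousLinearMap.le_opNorm _ _
    _ ≤ Ca * 1 := by
        refine mul_le_mul (hCa _) ?_ (norm_nonneg _) ?_
        · rw [norm_triple_y]; simp
        · exact (norm_nonneg (fderiv ℝ (fun q : E2 × ℝ × E2 => φ q.1 q.2.1 q.2.2)
            (x, w x, gradient w x))).trans (hCa _)
    _ = Ca := mul_one _

lemma phiZ_le (hAd : Differentiable ℝ (fun q : E2 × ℝ × E2 => φ q.1 q.2.1 q.2.2))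
    (hCa : ∀ q, ‖fderiv ℝ (fun q : E2 × ℝ × E2 => φ q.1 q.2.1 q.2.2) q‖ ≤ Ca)
    (w : E2 → ℝ) (x : E2) (u : E2) :
    ‖fderiv ℝ (φ x (w x)) (gradient w x) u‖ ≤ Ca * ‖u‖ := by
  rw [phiZ_rep hAd]
  calc ‖fderiv ℝ (fun q : E2 × ℝ × E2 => φ q.1 q.2.1 q.2.2) (x, w x, gradient w x) (0, 0, u)‖
      ≤ ‖fderiv ℝ (fun q : E2 × ℝ × E2 => φ q.1 q.2.1 q.2.2) (x, w x, gradient w x)‖ *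
        ‖((0 : E2), (0 : ℝ), u)‖ := ContinuousLinearMap.le_opNorm _ _
    _ ≤ Ca * ‖u‖ := by
        rw [norm_triple_z]
        exact mul_le_mul_of_nonneg_right (hCa _) (norm_nonneg _)

lemma fderiv_comp_meas (hΩm : MeasurableSet Ω)
    (hAc : Continuous (fderiv ℝ (fun q : E2 × ℝ × E2 => φ q.1 q.2.1 q.2.2)))
    (hw : ContinuousOn w Ω) :
    AEStronglyMeasurable
      (fun x => fderiv ℝ (fun q : E2 × ℝ × E2 => φ q.1 q.2.1 q.2.2) (x, w x, gradient w x))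
      (volume.restrict Ω) :=
  hAc.comp_aestronglyMeasurable
    (aestronglyMeasurable_id.prodMk ((hw.aestronglyMeasurable hΩm).prodMk
      (measurable_gradient' w).aestronglyMeasurable))

end PhiGeneric

end TGAux3
section TGAux4

/-- Bundled regularity for the nonlinearity. -/
def GoodPhi {G : Type*} [NormedAddCommGroup G] [NormedSpace ℝ G]
    (φ : E2 → ℝ → E2 → G) (Ca : ℝ) : Prop :=
  Differentiable ℝ (fun q : E2 × ℝ × E2 => φ q.1 q.2.1 q.2.2) ∧
  Continuous (fderiv ℝ (fun q : E2 × ℝ × E2 => φ q.1 q.2.1 q.2.2)) ∧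
  0 ≤ Ca ∧ ∀ q, ‖fderiv ℝ (fun q : E2 × ℝ × E2 => φ q.1 q.2.1 q.2.2) q‖ ≤ Ca

variable {Ω : Set E2} {a : E2 → ℝ → E2 → E2} {f : E2 → ℝ → E2 → ℝ}
variable {w v χ : E2 → ℝ} {Ca Cf : ℝ}

lemma T1_facts (hΩm : MeasurableSet Ω) (hA : GoodPhi a Ca) (hw : ContinuousOn w Ω)
    (hv : NiceFn Ω v) (hχ : NiceFn Ω χ) :
    Integrable (fun x => ⟪v x • aY a w x, gradient χ x⟫) (volume.restrict Ω) ∧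
      ∫ x in Ω, ⟪v x • aY a w x, gradient χ x⟫ ≤
        Ca * ((eLpNorm v 2 (volume.restrict Ω)).toReal *
          (eLpNorm (fun x => gradient χ x) 2 (volume.restrict Ω)).toReal) := by
  have hq := fderiv_comp_meas (φ := a) hΩm hA.2.1 hw
  have haY : AEStronglyMeasurable (fun x => aY a w x) (volume.restrict Ω) := by
    have h1 : (fun x => aY a w x) = fun x =>
        fderiv ℝ (fun q : E2 × ℝ × E2 => a q.1 q.2.1 q.2.2) (x, w x, gradient w x)
          ((0 : E2), (1 : ℝ), (0 : E2)) := funext fun x => phiY_rep hA.1 w x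
    rw [h1]
    exact isBoundedBilinearMap_apply.continuous.comp_aestronglyMeasurable
      (hq.prodMk aestronglyMeasurable_const)
  have hm : AEStronglyMeasurable (fun x => ⟪v x • aY a w x, gradient χ x⟫)
      (volume.restrict Ω) :=
    (hv.2.1.1.smul haY).inner (measurable_gradient' χ).aestronglyMeasurable
  refine integrable_and_integral_le hA.2.2.1 hm hv.2.1 hχ.2.2 fun x => ?_
  have ha1 : ‖aY a w x‖ ≤ Ca := phiY_le hA.1 hA.2.2.2 w x
  calc ‖⟪v x • aY a w x, gradient χ x⟫‖
      ≤ ‖v x • aY a w x‖ * ‖gradient χ x‖ := norm_inner_le_norm _ _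
    _ = ‖v x‖ * ‖aY a w x‖ * ‖gradient χ x‖ := by rw [norm_smul]
    _ ≤ Ca * (‖v x‖ * ‖gradient χ x‖) := by
        nlinarith [mul_le_mul_of_nonneg_right
          (mul_le_mul_of_nonneg_left ha1 (norm_nonneg (v x))) (norm_nonneg (gradient χ x))]

lemma T2_facts (hΩm : MeasurableSet Ω) (hA : GoodPhi a Ca) (hw : ContinuousOn w Ω)
    (hv : NiceFn Ω v) (hχ : NiceFn Ω χ) :
    Integrable (fun x => ⟪aZ a w x (gradient v x), gradient χ x⟫) (volume.restrict Ω) ∧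
      ∫ x in Ω, ⟪aZ a w x (gradient v x), gradient χ x⟫ ≤
        Ca * ((eLpNorm (fun x => gradient v x) 2 (volume.restrict Ω)).toReal *
          (eLpNorm (fun x => gradient χ x) 2 (volume.restrict Ω)).toReal) := by
  have hq := fderiv_comp_meas (φ := a) hΩm hA.2.1 hw
  have haZ : AEStronglyMeasurable (fun x => aZ a w x (gradient v x)) (volume.restrict Ω) := by
    have h1 : (fun x => aZ a w x (gradient v x)) = fun x =>
        fderiv ℝ (fun q : E2 × ℝ × E2 => a q.1 q.2.1 q.2.2) (x, w x, gradient w x)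
          ((0 : E2), (0 : ℝ), gradient v x) := funext fun x => phiZ_rep hA.1 w x (gradient v x)
    rw [h1]
    exact isBoundedBilinearMap_apply.continuous.comp_aestronglyMeasurable
      (hq.prodMk (aestronglyMeasurable_const.prodMk
        (aestronglyMeasurable_const.prodMk (measurable_gradient' v).aestronglyMeasurable)))
  have hm : AEStronglyMeasurable (fun x => ⟪aZ a w x (gradient v x), gradient χ x⟫)
      (volume.restrict Ω) :=
    haZ.inner (measurable_gradient' χ).aestronglyMeasurable
  refine integrable_and_integral_le hA.2.2.1 hm hv.2.2 hχ.2.2 fun x => ?_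
  have ha1 : ‖aZ a w x (gradient v x)‖ ≤ Ca * ‖gradient v x‖ :=
    phiZ_le hA.1 hA.2.2.2 w x (gradient v x)
  calc ‖⟪aZ a w x (gradient v x), gradient χ x⟫‖
      ≤ ‖aZ a w x (gradient v x)‖ * ‖gradient χ x‖ := norm_inner_le_norm _ _
    _ ≤ Ca * (‖gradient v x‖ * ‖gradient χ x‖) := by
        nlinarith [mul_le_mul_of_nonneg_right ha1 (norm_nonneg (gradient χ x))]

lemma T3_facts (hΩm : MeasurableSet Ω) (hF : GoodPhi f Cf) (hw : ContinuousOn w Ω)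
    (hv : NiceFn Ω v) (hχ : NiceFn Ω χ) :
    Integrable (fun x => fY f w x * v x * χ x) (volume.restrict Ω) ∧
      ∫ x in Ω, fY f w x * v x * χ x ≤
        Cf * ((eLpNorm v 2 (volume.restrict Ω)).toReal *
          (eLpNorm χ 2 (volume.restrict Ω)).toReal) := by
  have hq := fderiv_comp_meas (φ := f) hΩm hF.2.1 hw
  have hfY : AEStronglyMeasurable (fun x => fY f w x) (volume.restrict Ω) := by
    have h1 : (fun x => fY f w x) = fun x =>
        fderiv ℝ (fun q : E2 × ℝ × E2 => f q.1 q.2.1 q.2.2) (x, w x, gradient w x)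
          ((0 : E2), (1 : ℝ), (0 : E2)) := funext fun x => phiY_rep hF.1 w x
    rw [h1]
    exact isBoundedBilinearMap_apply.continuous.comp_aestronglyMeasurable
      (hq.prodMk aestronglyMeasurable_const)
  have hm : AEStronglyMeasurable (fun x => fY f w x * v x * χ x) (volume.restrict Ω) :=
    (hfY.mul hv.2.1.1).mul hχ.2.1.1
  refine integrable_and_integral_le hF.2.2.1 hm hv.2.1 hχ.2.1 fun x => ?_
  have hf1 : ‖fY f w x‖ ≤ Cf := phiY_le hF.1 hF.2.2.2 w x
  calc ‖fY f w x * v x * χ x‖ = ‖fY f w x‖ * ‖v x‖ * ‖χ x‖ := by rw [norm_mul, norm_mul]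
    _ ≤ Cf * (‖v x‖ * ‖χ x‖) := by
        nlinarith [mul_le_mul_of_nonneg_right
          (mul_le_mul_of_nonneg_right hf1 (norm_nonneg (v x))) (norm_nonneg (χ x))]

lemma T4_facts (hΩm : MeasurableSet Ω) (hF : GoodPhi f Cf) (hw : ContinuousOn w Ω)
    (hv : NiceFn Ω v) (hχ : NiceFn Ω χ) :
    Integrable (fun x => fZ f w x (gradient v x) * χ x) (volume.restrict Ω) ∧
      ∫ x in Ω, fZ f w x (gradient v x) * χ x ≤
        Cf * ((eLpNorm (fun x => gradient v x) 2 (volume.restrict Ω)).toReal *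
          (eLpNorm χ 2 (volume.restrict Ω)).toReal) := by
  have hq := fderiv_comp_meas (φ := f) hΩm hF.2.1 hw
  have hfZ : AEStronglyMeasurable (fun x => fZ f w x (gradient v x)) (volume.restrict Ω) := by
    have h1 : (fun x => fZ f w x (gradient v x)) = fun x =>
        fderiv ℝ (fun q : E2 × ℝ × E2 => f q.1 q.2.1 q.2.2) (x, w x, gradient w x)
          ((0 : E2), (0 : ℝ), gradient v x) := funext fun x => phiZ_rep hF.1 w x (gradient v x)
    rw [h1]
    exact isBoundedBilinearMap_apply.continuous.comp_aestronglyMeasurable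
      (hq.prodMk (aestronglyMeasurable_const.prodMk
        (aestronglyMeasurable_const.prodMk (measurable_gradient' v).aestronglyMeasurable)))
  have hm : AEStronglyMeasurable (fun x => fZ f w x (gradient v x) * χ x) (volume.restrict Ω) :=
    hfZ.mul hχ.2.1.1
  refine integrable_and_integral_le hF.2.2.1 hm hv.2.2 hχ.2.1 fun x => ?_
  have hf1 : ‖fZ f w x (gradient v x)‖ ≤ Cf * ‖gradient v x‖ :=
    phiZ_le hF.1 hF.2.2.2 w x (gradient v x)
  calc ‖fZ f w x (gradient v x) * χ x‖ = ‖fZ f w x (gradient v x)‖ * ‖χ x‖ := norm_mul _ _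
    _ ≤ Cf * (‖gradient v x‖ * ‖χ x‖) := by
        nlinarith [mul_le_mul_of_nonneg_right hf1 (norm_nonneg (χ x))]

end TGAux4
section TGAux5
variable {Ω : Set E2} {a : E2 → ℝ → E2 → E2} {f : E2 → ℝ → E2 → ℝ}
variable {w v v₁ v₂ χ : E2 → ℝ} {Ca Cf : ℝ}

lemma Bform_le (hΩm : MeasurableSet Ω) (hA : GoodPhi a Ca) (hF : GoodPhi f Cf)
    (hw : ContinuousOn w Ω) (hv : NiceFn Ω v) (hχ : NiceFn Ω χ) :
    Bform Ω a f w v χ ≤ (Ca + Cf) * (wNorm Ω 1 2 v * wNorm Ω 1 2 χ) := by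
  have t1 := (T1_facts hΩm hA hw hv hχ).2
  have t2 := (T2_facts hΩm hA hw hv hχ).2
  have t3 := (T3_facts hΩm hF hw hv hχ).2
  have t4 := (T4_facts hΩm hF hw hv hχ).2
  rw [wNorm_eq, wNorm_eq]
  unfold Bform
  set A0 := (eLpNorm v 2 (volume.restrict Ω)).toReal with hA0
  set A1 := (eLpNorm (fun x => gradient v x) 2 (volume.restrict Ω)).toReal with hA1
  set B0 := (eLpNorm χ 2 (volume.restrict Ω)).toReal with hB0
  set B1 := (eLpNorm (fun x => gradient χ x) 2 (volume.restrict Ω)).toReal with hB1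
  have h0 : 0 ≤ A0 := ENNReal.toReal_nonneg
  have h1 : 0 ≤ A1 := ENNReal.toReal_nonneg
  have h2 : 0 ≤ B0 := ENNReal.toReal_nonneg
  have h3 : 0 ≤ B1 := ENNReal.toReal_nonneg
  have hCa0 : 0 ≤ Ca := hA.2.2.1
  have hCf0 : 0 ≤ Cf := hF.2.2.1
  nlinarith [mul_nonneg (mul_nonneg hCa0 h0) h2, mul_nonneg (mul_nonneg hCa0 h1) h2,
    mul_nonneg (mul_nonneg hCa0 h0) h3, mul_nonneg (mul_nonneg hCa0 h1) h3,
    mul_nonneg (mul_nonneg hCf0 h0) h2, mul_nonneg (mul_nonneg hCf0 h1) h2,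
    mul_nonneg (mul_nonneg hCf0 h0) h3, mul_nonneg (mul_nonneg hCf0 h1) h3]

lemma Bform_neg' (Ω : Set E2) (a : E2 → ℝ → E2 → E2) (f : E2 → ℝ → E2 → ℝ)
    (w v χ : E2 → ℝ) : Bform Ω a f w (-v) χ = - Bform Ω a f w v χ := by
  unfold Bform
  have hg : ∀ x : E2, gradient (-v) x = - gradient v x := gradient_neg'' v
  simp only [Pi.neg_apply, neg_smul, inner_neg_left, hg, map_neg, neg_mul, mul_neg,
    integral_neg]
  ring

lemma Bform_add' (hΩo : IsOpen Ω) (hA : GoodPhi a Ca) (hF : GoodPhi f Cf)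
    (hw : ContinuousOn w Ω) (hv₁ : NiceFn Ω v₁) (hv₂ : NiceFn Ω v₂) (hχ : NiceFn Ω χ) :
    Bform Ω a f w (v₁ + v₂) χ = Bform Ω a f w v₁ χ + Bform Ω a f w v₂ χ := by
  have hΩm := hΩo.measurableSet
  have I1a := (T1_facts hΩm hA hw hv₁ hχ).1
  have I1b := (T1_facts hΩm hA hw hv₂ hχ).1
  have I2a := (T2_facts hΩm hA hw hv₁ hχ).1
  have I2b := (T2_facts hΩm hA hw hv₂ hχ).1
  have I3a := (T3_facts hΩm hF hw hv₁ hχ).1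
  have I3b := (T3_facts hΩm hF hw hv₂ hχ).1
  have I4a := (T4_facts hΩm hF hw hv₁ hχ).1
  have I4b := (T4_facts hΩm hF hw hv₂ hχ).1
  unfold Bform
  have e1 : (∫ x in Ω, ⟪(v₁ + v₂) x • aY a w x, gradient χ x⟫) =
      (∫ x in Ω, ⟪v₁ x • aY a w x, gradient χ x⟫) +
        ∫ x in Ω, ⟪v₂ x • aY a w x, gradient χ x⟫ := by
    rw [← integral_add I1a I1b]
    refine integral_congr_ae (Filter.Eventually.of_forall fun x => ?_)
    simp [add_smul, inner_add_left]
  have e2 : (∫ x in Ω, ⟪aZ a w x (gradient (v₁ + v₂) x), gradient χ x⟫) =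
      (∫ x in Ω, ⟪aZ a w x (gradient v₁ x), gradient χ x⟫) +
        ∫ x in Ω, ⟪aZ a w x (gradient v₂ x), gradient χ x⟫ := by
    rw [← integral_add I2a I2b]
    refine setIntegral_congr_fun hΩm fun x hx => ?_
    have d₁ := hv₁.1.differentiableAt (hΩo.mem_nhds hx)
    have d₂ := hv₂.1.differentiableAt (hΩo.mem_nhds hx)
    rw [gradient_add' d₁ d₂, map_add, inner_add_left]
  have e3 : (∫ x in Ω, fY f w x * (v₁ + v₂) x * χ x) =
      (∫ x in Ω, fY f w x * v₁ x * χ x) + ∫ x in Ω, fY f w x * v₂ x * χ x := by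
    rw [← integral_add I3a I3b]
    refine integral_congr_ae (Filter.Eventually.of_forall fun x => ?_)
    simp only [Pi.add_apply]
    ring
  have e4 : (∫ x in Ω, fZ f w x (gradient (v₁ + v₂) x) * χ x) =
      (∫ x in Ω, fZ f w x (gradient v₁ x) * χ x) +
        ∫ x in Ω, fZ f w x (gradient v₂ x) * χ x := by
    rw [← integral_add I4a I4b]
    refine setIntegral_congr_fun hΩm fun x hx => ?_
    have d₁ := hv₁.1.differentiableAt (hΩo.mem_nhds hx)
    have d₂ := hv₂.1.differentiableAt (hΩo.mem_nhds hx)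
    rw [gradient_add' d₁ d₂, map_add, add_mul]
  rw [e1, e2, e3, e4]
  ring

lemma Bform_sub' (hΩo : IsOpen Ω) (hA : GoodPhi a Ca) (hF : GoodPhi f Cf)
    (hw : ContinuousOn w Ω) (hv₁ : NiceFn Ω v₁) (hv₂ : NiceFn Ω v₂) (hχ : NiceFn Ω χ) :
    Bform Ω a f w (v₁ - v₂) χ = Bform Ω a f w v₁ χ - Bform Ω a f w v₂ χ := by
  have h : v₁ - v₂ = v₁ + -v₂ := sub_eq_add_neg _ _
  rw [h, Bform_add' hΩo hA hF hw hv₁ hv₂.neg' hχ, Bform_neg']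
  ring

end TGAux5
section TGFinal

lemma goodPhi_of {G : Type*} [NormedAddCommGroup G] [NormedSpace ℝ G]
    {φ : E2 → ℝ → E2 → G} {Ct : ℝ}
    (h2 : ContDiff ℝ 2 (fun q : E2 × ℝ × E2 => φ q.1 q.2.1 q.2.2)) (hCt : 0 < Ct)
    (hb : ∀ q : E2 × ℝ × E2, ∀ i : ℕ, 1 ≤ i → i ≤ 2 →
      ‖iteratedFDeriv ℝ i (fun q : E2 × ℝ × E2 => φ q.1 q.2.1 q.2.2) q‖ ≤ Ct) :
    GoodPhi φ Ct :=
  ⟨h2.differentiable (by norm_num), h2.continuous_fderiv (by norm_num), hCt.le,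
    fun q => norm_fderiv_uncurry_le hb q⟩

end TGFinal

/-- Lemma 4.5: the coarse-grid correction satisfies
`B(u_h^{k,1}; e_H^k, v_H) ≤ C (‖E_k‖₁ + ‖E_{k+1}‖₁) ‖v_H‖₁` for all `v_H ∈ V_H`,
with `C` independent of `h`, `H` and `k`. -/
theorem two_grid_stmt_11
    (Ω : Set E2) (a : E2 → ℝ → E2 → E2) (f : E2 → ℝ → E2 → ℝ)
    (r : ℕ) (hΩ : NiceDomain Ω) (ha : SmoothBoundedA a) (hf : SmoothBoundedF f)
    (hr : 1 ≤ r) :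
    ∃ C > (0:ℝ), ∀ (H h : ℝ) (VH Vh : Submodule ℝ (E2 → ℝ))
      (uh : E2 → ℝ) (uhk eHk : ℕ → E2 → ℝ),
      0 < h → h < H → H < 1 → VH ≤ Vh → FESpace Ω VH → FESpace Ω Vh →
      FESolution Ω a f Vh uh → TwoGrid Ω a f VH Vh uhk eHk →
      ∀ k : ℕ, ∀ vH ∈ VH,
        Bform Ω a f (uhk k + eHk k) (eHk k) vH ≤
          C * ((wNorm Ω 1 2 (uh - uhk k) + wNorm Ω 1 2 (uh - uhk (k + 1))) *
            wNorm Ω 1 2 vH) := by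
  obtain ⟨hc2A, CtA, hCtA, hbA⟩ := ha
  obtain ⟨hc2F, CtF, hCtF, hbF⟩ := hf
  have hGA : GoodPhi a CtA := goodPhi_of hc2A hCtA hbA
  have hGF : GoodPhi f CtF := goodPhi_of hc2F hCtF hbF
  refine ⟨CtA + CtF, by positivity, ?_⟩
  intro H h VH Vh uh uhk eHk _ _ _ hle hFEH hFEh hFES hTG k vH hvH
  have hΩo : IsOpen Ω := hΩ.1
  have hΩm : MeasurableSet Ω := hΩo.measurableSet
  have nice : ∀ g ∈ Vh, NiceFn Ω g := fun g hg => memH10_nice hΩm (hFEh.1 g hg)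
  have hmem : ∀ j : ℕ, uhk j ∈ Vh := by
    intro j
    cases j with
    | zero => exact hle hTG.1.1
    | succ j => exact (hTG.2 j).2.1
  have heH : eHk k ∈ Vh := hle (hTG.2 k).1.1
  have hwmem : uhk k + eHk k ∈ Vh := Vh.add_mem (hmem k) heH
  have hw : ContinuousOn (uhk k + eHk k) Ω := (nice _ hwmem).1.continuousOn
  have nwk : NiceFn Ω (uhk k) := nice _ (hmem k)
  have nwk1 : NiceFn Ω (uhk (k + 1)) := nice _ (hmem (k + 1))
  have ne : NiceFn Ω (eHk k) := nice _ heH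
  have nuh : NiceFn Ω uh := nice _ hFES.1
  have nv : NiceFn Ω vH := nice _ (hle hvH)
  have hA0 : Aform Ω a f (uhk k + eHk k) vH = 0 := (hTG.2 k).1.2 vH hvH
  have hfine := (hTG.2 k).2.2 vH (hle hvH)
  have hBw : Bform Ω a f (uhk k + eHk k) (uhk k + eHk k) vH =
      Bform Ω a f (uhk k + eHk k) (uhk k) vH +
        Bform Ω a f (uhk k + eHk k) (eHk k) vH :=
    Bform_add' hΩo hGA hGF hw nwk ne nv
  have hs1 : Bform Ω a f (uhk k + eHk k) (uh - uhk k) vH =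
      Bform Ω a f (uhk k + eHk k) uh vH - Bform Ω a f (uhk k + eHk k) (uhk k) vH :=
    Bform_sub' hΩo hGA hGF hw nuh nwk nv
  have hs2 : Bform Ω a f (uhk k + eHk k) (uh - uhk (k + 1)) vH =
      Bform Ω a f (uhk k + eHk k) uh vH -
        Bform Ω a f (uhk k + eHk k) (uhk (k + 1)) vH :=
    Bform_sub' hΩo hGA hGF hw nuh nwk1 nv
  have heq : Bform Ω a f (uhk k + eHk k) (eHk k) vH =
      Bform Ω a f (uhk k + eHk k) (uh - uhk k) vH -
        Bform Ω a f (uhk k + eHk k) (uh - uhk (k + 1)) vH := by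
    rw [hs1, hs2]
    linarith [hfine, hA0, hBw]
  have hb1 : Bform Ω a f (uhk k + eHk k) (uh - uhk k) vH ≤
      (CtA + CtF) * (wNorm Ω 1 2 (uh - uhk k) * wNorm Ω 1 2 vH) :=
    Bform_le hΩm hGA hGF hw (NiceFn.sub' hΩo nuh nwk) nv
  have hb2 : - Bform Ω a f (uhk k + eHk k) (uh - uhk (k + 1)) vH ≤
      (CtA + CtF) * (wNorm Ω 1 2 (uh - uhk (k + 1)) * wNorm Ω 1 2 vH) := by
    have hB := Bform_le hΩm hGA hGF hw ((NiceFn.sub' hΩo nuh nwk1).neg') nv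
    rw [wNorm_neg'] at hB
    rw [← Bform_neg']
    exact hB
  have hring : (CtA + CtF) * ((wNorm Ω 1 2 (uh - uhk k) + wNorm Ω 1 2 (uh - uhk (k + 1))) *
      wNorm Ω 1 2 vH) =
      (CtA + CtF) * (wNorm Ω 1 2 (uh - uhk k) * wNorm Ω 1 2 vH) +
        (CtA + CtF) * (wNorm Ω 1 2 (uh - uhk (k + 1)) * wNorm Ω 1 2 vH) := by ring
  rw [heq, hring]
  linarith [hb1, hb2]
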